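/- (Lemma 4 (iv)) For fixed x ∈ [0,1], as n → ∞, 1 − c_n(0,x)·(n+1)/(n+x) = −(1/2)/(n+1+x) + (1/(n+1+x)²)·(x²/2 − x/2 − 7/24) + o(1/n²); i.e. n² times the difference of the two sides tends to 0. -/

import Mathlib

open MeasureTheory ProbabilityTheory Filter Real Set
open scoped ENNReal NNReal

/-- Distribution of `Z_λ = N_λ + U`, `N_λ` Poisson(λ), `U` uniform on `(0,1)`, independent. -/
noncomputable def zMeasure (l : ℝ) : Measure ℝ :=
  Measure.map (fun p : ℝ × ℝ => p.1 + p.2)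
    ((Measure.map (Nat.cast : ℕ → ℝ) (poissonMeasure l.toNNReal)).prod
      (volume.restrict (Set.Ioo (0 : ℝ) 1)))

/-- The median of `Z_λ`: `inf {t : P(Z_λ ≤ t) ≥ 1/2}`. -/
noncomputable def medianZ (l : ℝ) : ℝ :=
  sInf {t : ℝ | (1 : ℝ≥0∞) / 2 ≤ zMeasure l (Set.Iic t)}

/-- The function `H` of the main theorem. -/
noncomputable def Hfun (x : ℝ) : ℝ :=
  if x ≤ 2 / 3 then x ^ 2 * (x - 1) / 3 + 4 / 135
  else x / 3 * (x ^ 2 - 4 * x + 5) - 86 / 135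

/-- `w_n(x,k) = P(Z_{n+x} ≤ n + x + 1/3 + k/(n+x))`. -/
noncomputable def w (n : ℕ) (x k : ℝ) : ℝ :=
  (zMeasure (n + x) (Set.Iic ((n : ℝ) + x + 1 / 3 + k / (n + x)))).toReal

/-- `r_n(x,k) = k/(n+x)`. -/
noncomputable def r (n : ℕ) (x k : ℝ) : ℝ := k / (n + x)

/-- `g_n(u) = e^{-u} u^n`. -/
noncomputable def g (n : ℕ) (u : ℝ) : ℝ := Real.exp (-u) * u ^ n

/-- `c_n(v,x) = ((n+v+x)/(n+1+x))^{n+1} e^{1-v}`. -/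
noncomputable def c (n : ℕ) (v x : ℝ) : ℝ :=
  (((n : ℝ) + v + x) / ((n : ℝ) + 1 + x)) ^ (n + 1) * Real.exp (1 - v)

/-- `Δ_n(x,k) = ((n+1)!/g_{n+1}(n+1+x)) (w_{n+1}(x,k) - w_n(x,k))`. -/
noncomputable def Δfun (n : ℕ) (x k : ℝ) : ℝ :=
  ((n + 1).factorial : ℝ) / g (n + 1) ((n : ℝ) + 1 + x) * (w (n + 1) x k - w n x k)

set_option maxHeartbeats 1000000 in
lemma key_bound (x t : ℝ) (hx0 : 0 ≤ x) (hx1 : x ≤ 1) (ht : 0 < t) (ht' : t ≤ 1/20) :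
    |1 - Real.exp (1 + (1/t - x - 1) * Real.log (1 - t) + Real.log (1 - x*t))
      + t/2 - (x^2/2 - x/2 - 7/24) * t^2| ≤ 20 * t^3 := by
  have ht1 : |t| < 1 := by rw [abs_of_pos ht]; linarith
  have hxtt : x * t ≤ t := by nlinarith
  have hxt0 : 0 ≤ x * t := mul_nonneg hx0 ht.le
  have hxt1 : |x*t| < 1 := by rw [abs_of_nonneg hxt0]; nlinarith
  set L₁ := Real.log (1 - t) with hL₁
  set L₂ := Real.log (1 - x*t) with hL₂
  set E₁ := L₁ + (t + t^2/2 + t^3/3) with hE₁def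
  set E₂ := L₂ + (x*t + (x*t)^2/2) with hE₂def
  have hE₁ : |E₁| ≤ 2 * t^4 := by
    have h := Real.abs_log_sub_add_sum_range_le ht1 3
    rw [abs_of_pos ht] at h
    have hsum : (∑ i ∈ Finset.range 3, t ^ (i + 1) / (i + 1)) = t + t^2/2 + t^3/3 := by
      simp [Finset.sum_range_succ]; ring
    rw [hsum] at h
    have h2 : t^4 / (1 - t) ≤ 2 * t^4 := by
      rw [div_le_iff₀ (by linarith)]; nlinarith [pow_pos ht 4]
    calc |E₁| = |(t + t^2/2 + t^3/3) + L₁| := by rw [hE₁def, add_comm]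
      _ ≤ t^(3+1)/(1-t) := h
      _ ≤ 2*t^4 := by norm_num at h2 ⊢; linarith
  have hE₂ : |E₂| ≤ 2 * t^3 := by
    have h := Real.abs_log_sub_add_sum_range_le hxt1 2
    rw [abs_of_nonneg hxt0] at h
    have hsum : (∑ i ∈ Finset.range 2, (x*t) ^ (i + 1) / (i + 1)) = x*t + (x*t)^2/2 := by
      simp [Finset.sum_range_succ]; ring
    rw [hsum] at h
    have h1 : (x*t)^3 ≤ t^3 := pow_le_pow_left₀ hxt0 hxtt 3
    have h2 : (x*t)^3 / (1 - x*t) ≤ 2 * t^3 := by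
      rw [div_le_iff₀ (by nlinarith)]; nlinarith [pow_pos ht 3]
    calc |E₂| = |(x*t + (x*t)^2/2) + L₂| := by rw [hE₂def, add_comm]
      _ ≤ (x*t)^(2+1)/(1-x*t) := h
      _ ≤ 2*t^3 := by norm_num at h2 ⊢; linarith
  set S := 1 + (1/t - x - 1) * L₁ + L₂ with hS
  set b : ℝ := 1/6 + x/2 - x^2/2 with hb
  have hρ : S - t/2 - b*t^2 = (x+1)*t^3/3 + (1/t - x - 1)*E₁ + E₂ := by
    rw [hS, hE₁def, hE₂def, hb]
    field_simp
    ring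
  have hinvt : (20:ℝ) ≤ 1/t := by rw [le_div_iff₀ ht]; linarith
  have hc0 : 0 ≤ 1/t - x - 1 := by linarith
  have hc1 : 1/t - x - 1 ≤ 1/t := by linarith
  have hmid : |(1/t - x - 1)*E₁| ≤ 2*t^3 := by
    rw [abs_mul, abs_of_nonneg hc0]
    have h3 : (1/t - x - 1) * |E₁| ≤ (1/t) * (2*t^4) :=
      mul_le_mul hc1 hE₁ (abs_nonneg _) (by positivity)
    have h4 : (1/t) * (2*t^4) = 2*t^3 := by field_simp
    linarith
  clear_value b S E₂ E₁ L₂ L₁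
  have hρbd : |S - t/2 - b*t^2| ≤ 5 * t^3 := by
    rw [hρ]
    have h1 : |(x+1)*t^3/3| ≤ (2/3)*t^3 := by
      rw [abs_of_nonneg (by positivity)]; nlinarith [pow_pos ht 3]
    calc |(x+1)*t^3/3 + (1/t - x - 1)*E₁ + E₂|
        ≤ |(x+1)*t^3/3 + (1/t - x - 1)*E₁| + |E₂| := abs_add_le _ _
      _ ≤ |(x+1)*t^3/3| + |(1/t - x - 1)*E₁| + |E₂| := by
          linarith [abs_add_le ((x+1)*t^3/3) ((1/t - x - 1)*E₁)]
      _ ≤ 5*t^3 := by nlinarith [pow_pos ht 3]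
  have hbbd : |b| ≤ 1 := by
    rw [abs_le, hb]; constructor <;> nlinarith [mul_nonneg hx0 (by linarith : (0:ℝ) ≤ 1-x)]
  have hρ2 := abs_le.mp hρbd
  have hb2 := abs_le.mp hbbd
  have ht2 : t^2 ≤ t/20 := by nlinarith
  have ht3 : t^3 ≤ t^2/20 := by nlinarith [sq_nonneg t]
  have hbt2 : -(t^2) ≤ b*t^2 ∧ b*t^2 ≤ t^2 := by
    constructor
    · have := mul_le_mul_of_nonneg_right hb2.1 (by positivity : (0:ℝ) ≤ t^2); linarith
    · have := mul_le_mul_of_nonneg_right hb2.2 (by positivity : (0:ℝ) ≤ t^2); linarith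
  have hSbd : |S| ≤ t := by
    rw [abs_le]; constructor <;> linarith [hρ2.1, hρ2.2, hbt2.1, hbt2.2]
  have hS1 : |S| ≤ 1 := le_trans hSbd (by linarith)
  have hE₃ : |Real.exp S - (1 + S + S^2/2)| ≤ t^3 := by
    have h := Real.exp_bound hS1 (by norm_num : 0 < 3)
    have hsum : (∑ m ∈ Finset.range 3, S ^ m / m.factorial) = 1 + S + S^2/2 := by
      simp [Finset.sum_range_succ, Nat.factorial]
    rw [hsum] at h
    have h3 : |S|^3 ≤ t^3 := pow_le_pow_left₀ (abs_nonneg _) hSbd 3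
    have h5 : |S|^3 * ((3:ℕ).succ / (((3:ℕ).factorial : ℝ) * 3)) ≤ t^3 := by
      have : (((3:ℕ).succ : ℝ) / (((3:ℕ).factorial : ℝ) * 3)) = 2/9 := by
        norm_num [Nat.factorial]
      rw [this]
      nlinarith [pow_nonneg (abs_nonneg S) 3]
    calc |Real.exp S - (1 + S + S^2/2)| ≤ |S|^3 * ((3:ℕ).succ / (((3:ℕ).factorial : ℝ) * 3)) := by
          exact_mod_cast h
      _ ≤ t^3 := h5
  have hQ : 1 - Real.exp S + t/2 - (x^2/2 - x/2 - 7/24) * t^2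
      = -(Real.exp S - (1 + S + S^2/2)) - (S - t/2 - b*t^2) - (S - t/2)*(S + t/2)/2 := by
    rw [hb]; ring
  have h1 : |S - t/2| ≤ 2*t^2 := by
    rw [abs_le]; constructor <;> linarith [hρ2.1, hρ2.2, hbt2.1, hbt2.2]
  have h2 : |S + t/2| ≤ 2*t := by
    have := abs_le.mp hSbd
    rw [abs_le]; constructor <;> linarith
  have hQ3 : |(S - t/2)*(S + t/2)/2| ≤ 2*t^3 := by
    rw [abs_div, abs_mul]
    have : |S - t/2| * |S + t/2| ≤ (2*t^2) * (2*t) :=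
      mul_le_mul h1 h2 (abs_nonneg _) (by positivity)
    rw [abs_of_nonneg (by norm_num : (0:ℝ) ≤ 2)]
    nlinarith
  rw [hQ]
  calc |(-(Real.exp S - (1 + S + S^2/2))) - (S - t/2 - b*t^2) - (S - t/2)*(S + t/2)/2|
      ≤ |(-(Real.exp S - (1 + S + S^2/2))) - (S - t/2 - b*t^2)| + |(S - t/2)*(S + t/2)/2| :=
        abs_sub _ _
    _ ≤ |(-(Real.exp S - (1 + S + S^2/2)))| + |S - t/2 - b*t^2| + |(S - t/2)*(S + t/2)/2| := by
        linarith [abs_sub (-(Real.exp S - (1 + S + S^2/2))) (S - t/2 - b*t^2)]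
    _ = |Real.exp S - (1 + S + S^2/2)| + |S - t/2 - b*t^2| + |(S - t/2)*(S + t/2)/2| := by
        rw [abs_neg]
    _ ≤ 20*t^3 := by nlinarith [pow_pos ht 3]

theorem lemma4_iv (x : ℝ) (hx : x ∈ Set.Icc (0 : ℝ) 1) :
    Tendsto (fun n : ℕ => (n : ℝ) ^ 2 *
      ((1 - c n 0 x * (((n : ℝ) + 1) / ((n : ℝ) + x))) -
        (-(1 / 2) / ((n : ℝ) + 1 + x)
          + 1 / ((n : ℝ) + 1 + x) ^ 2 * (x ^ 2 / 2 - x / 2 - 7 / 24))))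
      atTop (nhds 0) := by
  obtain ⟨hx0, hx1⟩ := hx
  apply squeeze_zero_norm' (a := fun n : ℕ => 20 / (n : ℝ))
  · filter_upwards [eventually_ge_atTop 19] with n hn
    have hn1 : (1:ℝ) ≤ (n:ℝ) := by exact_mod_cast Nat.one_le_iff_ne_zero.mpr (by omega)
    have hn19 : (19:ℝ) ≤ (n:ℝ) := by exact_mod_cast hn
    set m : ℝ := (n:ℝ) + 1 + x with hm
    have hm0 : 0 < m := by rw [hm]; linarith
    set t : ℝ := 1/m with htdef
    have ht0 : 0 < t := by positivity
    have ht20 : t ≤ 1/20 := by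
      rw [htdef, div_le_div_iff₀ hm0 (by norm_num)]; rw [hm]; linarith
    have hnx : (0:ℝ) < (n:ℝ) + x := by linarith
    have h1t : 1 - t = ((n:ℝ)+x)/m := by rw [htdef, hm]; field_simp; ring
    have h1xt : 1 - x*t = ((n:ℝ)+1)/m := by rw [htdef, hm]; field_simp; ring
    have hinv : 1/t - x - 1 = (n:ℝ) := by rw [htdef, hm]; field_simp; ring
    have hcval : c n 0 x * (((n : ℝ) + 1) / ((n : ℝ) + x))
        = Real.exp (1 + (1/t - x - 1) * Real.log (1 - t) + Real.log (1 - x*t)) := by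
      rw [hinv, h1t, h1xt]
      rw [Real.exp_add, Real.exp_add, Real.exp_nat_mul,
        Real.exp_log (by positivity : (0:ℝ) < ((n:ℝ)+x)/m),
        Real.exp_log (by positivity : (0:ℝ) < ((n:ℝ)+1)/m)]
      rw [c]
      rw [show (n:ℝ) + 0 + x = (n:ℝ) + x by ring, ← hm]
      rw [pow_succ]
      have : Real.exp (1 - 0) = Real.exp 1 := by norm_num
      rw [this]
      field_simp
    have heq : (n : ℝ) ^ 2 *
        ((1 - c n 0 x * (((n : ℝ) + 1) / ((n : ℝ) + x))) -
          (-(1 / 2) / ((n : ℝ) + 1 + x)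
            + 1 / ((n : ℝ) + 1 + x) ^ 2 * (x ^ 2 / 2 - x / 2 - 7 / 24)))
        = (n:ℝ)^2 * (1 - Real.exp (1 + (1/t - x - 1) * Real.log (1 - t)
            + Real.log (1 - x*t)) + t/2 - (x^2/2 - x/2 - 7/24) * t^2) := by
      rw [hcval, ← hm]
      have : -(1/2)/m + 1/m^2 * (x^2/2 - x/2 - 7/24)
          = -(t/2) + (x^2/2 - x/2 - 7/24) * t^2 := by
        rw [htdef]; field_simp
      rw [this]; ring
    rw [heq]
    have hkey := key_bound x t hx0 hx1 ht0 ht20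
    have hnt : (n:ℝ) * t ≤ 1 := by
      rw [htdef, mul_one_div, div_le_one hm0, hm]; linarith
    have htn : t ≤ 1/(n:ℝ) := by
      rw [htdef, div_le_div_iff₀ hm0 (by linarith), hm]; linarith
    rw [norm_mul, norm_pow, Real.norm_eq_abs, Real.norm_eq_abs,
      abs_of_nonneg (by positivity : (0:ℝ) ≤ (n:ℝ))]
    calc (n:ℝ)^2 * |_root_.id (1 - Real.exp (1 + (1/t - x - 1) * Real.log (1 - t)
            + Real.log (1 - x*t)) + t/2 - (x^2/2 - x/2 - 7/24) * t^2)| ≤ (n:ℝ)^2 * (20*t^3) := by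
          apply mul_le_mul_of_nonneg_left _ (by positivity)
          simpa using hkey
      _ = 20 * ((n:ℝ)*t)^2 * t := by ring
      _ ≤ 20 * 1^2 * t := by
          have h0 : 0 ≤ (n:ℝ)*t := by positivity
          nlinarith
      _ ≤ 20 / (n:ℝ) := by
          rw [one_pow, mul_one, div_eq_mul_one_div]
          exact mul_le_mul_of_nonneg_left htn (by norm_num)
  · exact tendsto_const_div_atTop_nhds_zero_nat 20
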